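/- Let X be a set, f : X → X an acyclic function, t ≥ 1, s = 6t, r = 4s², H an r-forward-independent hitting set for f, and c_H : X → {0,1} the associated two-coloring with induced partition X = U_0 ⊔ U_1. Let ℓ(x) ≥ 1 be minimal with c_H(f^{ℓ(x)}(x)) ≠ c_H(x) and set e(x) = f^{s/3 + ℓ(x)}(x). If x, y ∈ U_i lie in the same F_t(U_i)-class, then there exists k ∈ ℕ with f^k(y) = e(x). -/

import Mathlib

set_option linter.unusedVariables false

def Acyclic {X : Type*} (f : X → X) : Prop := ∀ x : X, ∀ k : ℕ, 1 ≤ k → f^[k] x ≠ x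

def Hitting {X : Type*} (f : X → X) (H : Set X) : Prop :=
  ∀ x : X, ∃ k : ℕ, 1 ≤ k ∧ f^[k] x ∈ H

def FwdIndep {X : Type*} (f : X → X) (r : ℕ) (H : Set X) : Prop :=
  ∀ x ∈ H, ∀ k : ℕ, 1 ≤ k → f^[k] x ∈ H → r < k

def funGraph {X : Type*} (f : X → X) : SimpleGraph X where
  Adj x y := x ≠ y ∧ (f x = y ∨ f y = x)
  symm := ⟨fun x y h => ⟨h.1.symm, h.2.symm⟩⟩
  loopless := ⟨fun x h => h.1 rfl⟩

/-- `x` and `y` are reachable from one another and at graph distance at most `r`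
in the graph generated by `f`. -/
def distLE {X : Type*} (f : X → X) (r : ℕ) (x y : X) : Prop :=
  (funGraph f).Reachable x y ∧ (funGraph f).dist x y ≤ r

/-- The generating relation of the equivalence relation `F_t(U)`. -/
def classRel {X : Type*} (f : X → X) (t : ℕ) (U : Set X) : X → X → Prop :=
  fun a b => a ∈ U ∧ b ∈ U ∧ distLE f t a b

/-- The ball of radius `t` around `x` in the graph generated by `f`. -/
def ball {X : Type*} (f : X → X) (t : ℕ) (x : X) : Set X := {y | distLE f t x y}

/-- A directed path of length `k` from `u` to `w` in the digraph `E`. -/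
def DiPath {V : Type*} (E : V → V → Prop) (k : ℕ) (u w : V) : Prop :=
  ∃ p : ℕ → V, p 0 = u ∧ p k = w ∧ ∀ i < k, E (p i) (p (i+1))

/-- The digraph `D_r` on ℕ. -/
def Drel (r : ℕ) (k l : ℕ) : Prop := (0 < k ∧ l = k - 1) ∨ (k = 0 ∧ r ≤ l)

/-- A directed path of length `k` from `u` to `w` staying inside `A`. -/
def PathIn {V : Type*} (E : V → V → Prop) (A : Set V) (k : ℕ) (u w : V) : Prop :=
  ∃ p : ℕ → V, p 0 = u ∧ p k = w ∧ (∀ i ≤ k, p i ∈ A) ∧ ∀ i < k, E (p i) (p (i+1))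

/-- `A` is a strong connectivity component of the digraph `E`. -/
def IsSCC {V : Type*} (E : V → V → Prop) (A : Set V) : Prop :=
  (∀ v ∈ A, ∀ w ∈ A, ∃ k, PathIn E A k v w) ∧
  ∀ B : Set V, A ⊆ B → (∀ v ∈ B, ∀ w ∈ B, ∃ k, PathIn E B k v w) → B = A

theorem stmt19 {X : Type*} (f : X → X) (hf : Acyclic f) (t : ℕ) (ht : 1 ≤ t)
    (s r : ℕ) (hs : s = 6*t) (hrr : r = 4*s^2)
    (H : Set X) (hHit : Hitting f H) (hInd : FwdIndep f r H)
    (k : X → ℕ)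
    (hk : ∀ x, 1 ≤ k x ∧ f^[k x] x ∈ H ∧ ∀ j, 1 ≤ j → j < k x → f^[j] x ∉ H)
    (m : ℕ) (a : ℕ → ℕ) (ha0 : a 0 = 0) (haTop : a (2*m+1) = r/2)
    (hsize : ∀ i ≤ 2*m, a (i+1) = a i + s ∨ a (i+1) = a i + s + 1)
    (c : X → ℕ) (hc01 : ∀ x, c x = 0 ∨ c x = 1)
    (hcBig : ∀ x, r/2 ≤ k x → c x = (k x / s) % 2)
    (hcT0 : ∀ x, k x < r/2 → c (f^[k x] x) = 0 → c x = (k x / s) % 2)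
    (hcT1 : ∀ x, k x < r/2 → c (f^[k x] x) = 1 →
      ∀ i ≤ 2*m, a i ≤ k x → k x < a (i+1) → c x = (i+1) % 2)
    (L : X → ℕ)
    (hL : ∀ x, 1 ≤ L x ∧ c (f^[L x] x) ≠ c x ∧ ∀ j, 1 ≤ j → j < L x → c (f^[j] x) = c x) :
    ∀ i ≤ 1, ∀ x y : X, c x = i →
      Relation.EqvGen (classRel f t {z | c z = i}) x y →
      ∃ k' : ℕ, f^[k'] y = f^[2*t + L x] x := by
  -- numeric preliminaries
  have hts : t ≤ s := by omega
  obtain ⟨S, hS⟩ : ∃ S, s * s = S := ⟨_, rfl⟩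
  have hrS : r = 4 * S := by rw [hrr, pow_two, hS]
  have hr2 : r / 2 = 2 * S := by omega
  have hS6 : 6 * s ≤ S := by rw [← hS]; exact Nat.mul_le_mul (by omega) (le_refl s)
  have hsr2 : s < r / 2 := by omega
  -- basic facts about k and L
  have hk1 : ∀ x, 1 ≤ k x := fun x => (hk x).1
  have hkH : ∀ x, f^[k x] x ∈ H := fun x => (hk x).2.1
  have hkmin : ∀ x j, 1 ≤ j → j < k x → f^[j] x ∉ H := fun x => (hk x).2.2
  have hL1 : ∀ x, 1 ≤ L x := fun x => (hL x).1
  have hLflip : ∀ x, c (f^[L x] x) ≠ c x := fun x => (hL x).2.1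
  have hLconst : ∀ x j, 1 ≤ j → j < L x → c (f^[j] x) = c x := fun x => (hL x).2.2
  have kuniq : ∀ x n, 1 ≤ n → f^[n] x ∈ H → (∀ j, 1 ≤ j → j < n → f^[j] x ∉ H) → k x = n := by
    intro x n h1 h2 h3
    rcases lt_trichotomy (k x) n with h | h | h
    · exact absurd (hkH x) (h3 (k x) (hk1 x) h)
    · exact h
    · exact absurd h2 (hkmin x n h1 h)
  have Luniq : ∀ x n, 1 ≤ n → c (f^[n] x) ≠ c x →
      (∀ j, 1 ≤ j → j < n → c (f^[j] x) = c x) → L x = n := by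
    intro x n h1 h2 h3
    rcases lt_trichotomy (L x) n with h | h | h
    · exact absurd (h3 (L x) (hL1 x) h) (hLflip x)
    · exact h
    · exact absurd (hLconst x n h1 h) h2
  have kshift : ∀ x j, 1 ≤ j → j + 1 ≤ k x →
      k (f^[j] x) = k x - j ∧ f^[k x - j] (f^[j] x) = f^[k x] x := by
    intro x j hj1 hj2
    have he : f^[k x - j] (f^[j] x) = f^[k x] x := by
      rw [← Function.iterate_add_apply, show (k x - j) + j = k x from by omega]
    refine ⟨kuniq _ _ (by omega) (by rw [he]; exact hkH x) ?_, he⟩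
    intro j' h1' h2'
    have e : f^[j'] (f^[j] x) = f^[j' + j] x := (Function.iterate_add_apply f j' j x).symm
    rw [e]
    exact hkmin x (j' + j) (by omega) (by omega)
  -- the partition
  have ASTEP : ∀ i, i ≤ 2*m → a i + s ≤ a (i+1) := by
    intro i hi; rcases hsize i hi with h | h <;> omega
  have AMONO : ∀ i j, i ≤ j → j ≤ 2*m + 1 → a i ≤ a j := by
    intro i j hij
    induction hij with
    | refl => intro _; exact le_rfl
    | @step jj hjj ihj =>
      intro hj
      have h1 := ihj (by omega)
      have h2 := ASTEP jj (by omega)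
      show a i ≤ a (jj + 1)
      omega
  have UNIQ : ∀ n' i j, i ≤ 2*m → j ≤ 2*m → a i ≤ n' → n' < a (i+1) →
      a j ≤ n' → n' < a (j+1) → i = j := by
    intro n' i j hi hj h1 h2 h3 h4
    by_contra hne
    rcases lt_or_ge i j with h | h
    · have := AMONO (i+1) j (by omega) (by omega)
      omega
    · have hlt : j < i := by omega
      have := AMONO (j+1) i (by omega) (by omega)
      omega
  have aexist : ∀ n', n' < r / 2 → ∃ i, i ≤ 2*m ∧ a i ≤ n' ∧ n' < a (i+1) := by
    have main : ∀ J, J ≤ 2*m + 1 → ∀ n', n' < a J →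
        ∃ i, i < J ∧ a i ≤ n' ∧ n' < a (i+1) := by
      intro J
      induction J with
      | zero => intro _ n' hn'; rw [ha0] at hn'; exact absurd hn' (Nat.not_lt_zero n')
      | succ J ihJ =>
        intro hJ n' hn'
        rcases le_or_gt (a J) n' with h | h
        · exact ⟨J, by omega, h, hn'⟩
        · obtain ⟨i, h1, h2, h3⟩ := ihJ (by omega) n' h
          exact ⟨i, by omega, h2, h3⟩
    intro n' hn'
    obtain ⟨i, h1, h2, h3⟩ := main (2*m+1) le_rfl n' (by rw [haTop]; exact hn')
    exact ⟨i, by omega, h2, h3⟩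
  -- color of points close to a hitting point
  have SMALL : ∀ x, k x < s → c x = c (f^[k x] x) := by
    intro x hxs
    have hlt : k x < r/2 := by omega
    rcases hc01 (f^[k x] x) with h0 | h1
    · rw [hcT0 x hlt h0, h0, Nat.div_eq_of_lt hxs]
    · have ha1 : k x < a 1 := by
        have h01 := ASTEP 0 (by omega)
        have e01 : (0:ℕ) + 1 = 1 := rfl
        rw [e01] at h01
        omega
      rw [hcT1 x hlt h1 0 (by omega) (by omega) ha1, h1]
  -- colors are determined by the k-value and the hitting point
  have CWD : ∀ z1 z2, k z1 = k z2 → f^[k z1] z1 = f^[k z2] z2 → c z1 = c z2 := by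
    intro z1 z2 hkk hh
    rcases lt_or_ge (k z1) (r/2) with hlt | hge
    · rcases hc01 (f^[k z1] z1) with h0 | h1
      · have h0' : c (f^[k z2] z2) = 0 := by rw [← hh]; exact h0
        rw [hcT0 z1 hlt h0, hcT0 z2 (by omega) h0', hkk]
      · have h1' : c (f^[k z2] z2) = 1 := by rw [← hh]; exact h1
        obtain ⟨i', hi', hle', hlt'⟩ := aexist (k z1) hlt
        rw [hcT1 z1 hlt h1 i' hi' hle' hlt', hcT1 z2 (by omega) h1' i' hi' (by omega) (by omega)]
    · rw [hcBig z1 hge, hcBig z2 (by omega), hkk]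
  -- arithmetic on floors
  have DIV : ∀ n', 1 ≤ n' → (n' / s) % 2 ≠ ((n' - 1) / s) % 2 → s ∣ n' := by
    intro n' h1 hne
    by_contra hdvd
    have hs0 : 0 < s := by omega
    have hmod : n' % s ≠ 0 := fun hh => hdvd (Nat.dvd_of_mod_eq_zero hh)
    have h1B : 1 ≤ n' % s := Nat.one_le_iff_ne_zero.mpr hmod
    have hdm := Nat.div_add_mod n' s
    have hml : n' % s < s := Nat.mod_lt _ hs0
    have e0 : s * (n' / s) + (n' % s - 1) + 1 = n' := by
      rw [Nat.add_assoc, Nat.sub_add_cancel h1B]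
      exact hdm
    have e : n' - 1 = s * (n' / s) + (n' % s - 1) := (Nat.eq_sub_of_add_eq e0).symm
    have e2 : (n' - 1) / s = n' / s + (n' % s - 1) / s := by rw [e, Nat.mul_add_div hs0]
    have e3 : (n' % s - 1) / s = 0 :=
      Nat.div_eq_of_lt (lt_of_le_of_lt (Nat.sub_le _ _) hml)
    apply hne
    rw [e2, e3, Nat.add_zero]
  have DIVR : ∀ n' mm, s ∣ n' → 1 ≤ n' → n' - s ≤ mm → mm < n' → mm / s = n' / s - 1 := by
    intro n' mm hdvd h1 h2 h3
    have hs0 : 0 < s := by omega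
    obtain ⟨c1, rfl⟩ := hdvd
    have hc1 : c1 ≠ 0 := by rintro rfl; simp at h1
    obtain ⟨c2, rfl⟩ : ∃ c2, c1 = c2 + 1 := ⟨c1 - 1, by omega⟩
    have e1 : s * (c2 + 1) = s * c2 + s := by ring
    have lo : c2 * s ≤ mm := by
      rw [e1, Nat.add_sub_cancel] at h2
      rw [mul_comm]
      exact h2
    have hi : mm < (c2 + 1) * s := by rw [mul_comm]; exact h3
    have hq := Nat.div_eq_of_lt_le lo hi
    rw [hq, Nat.mul_div_cancel_left _ hs0]
    omega
  -- the run lemma: after a color flip, the color is constant for at least t further steps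
  have RUN : ∀ z, c (f z) ≠ c z → ∀ d, d ≤ t - 1 → c (f^[d+1] z) = c (f z) := by
    intro z hflip d hd
    have hn1 : 1 ≤ k z := hk1 z
    have hn2 : 2 ≤ k z := by
      by_contra hcon
      have h1 : k z = 1 := by omega
      have e := SMALL z (by omega)
      rw [h1] at e
      simp only [Function.iterate_one] at e
      exact hflip e.symm
    have hfz := kshift z 1 le_rfl (by omega)
    simp only [Function.iterate_one] at hfz
    have hnt : t + 1 ≤ k z := by
      by_contra hcon
      have e1 := SMALL z (by omega)
      have e2 := SMALL (f z) (by rw [hfz.1]; omega)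
      rw [hfz.1, hfz.2] at e2
      exact hflip (e2.trans e1.symm)
    have hxd := kshift z (d+1) (by omega) (by omega)
    have cbig : ∀ (y : X) (mm : ℕ), k y = mm → f^[mm] y = f^[k z] z →
        (c (f^[k z] z) = 0 ∨ r/2 ≤ mm) → c y = (mm / s) % 2 := by
      intro y mm hky hhy hor
      rcases lt_or_ge mm (r/2) with hlt | hge
      · have hg0 : c (f^[k z] z) = 0 := by
          rcases hor with h | h
          · exact h
          · omega
        have hcy : c (f^[k y] y) = 0 := by rw [hky, hhy]; exact hg0
        rw [hcT0 y (by rw [hky]; exact hlt) hcy, hky]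
      · rw [hcBig y (by rw [hky]; exact hge), hky]
    rcases hc01 (f^[k z] z) with hγ | hγ
    · -- hitting color 0
      have e1 : c z = (k z / s) % 2 := cbig z (k z) rfl rfl (Or.inl hγ)
      have e2 : c (f z) = ((k z - 1) / s) % 2 := cbig (f z) (k z - 1) hfz.1 hfz.2 (Or.inl hγ)
      have e3 : c (f^[d+1] z) = ((k z - (d+1)) / s) % 2 :=
        cbig _ _ hxd.1 hxd.2 (Or.inl hγ)
      have hdvd : s ∣ k z := by
        apply DIV (k z) (by omega)
        intro hp; exact hflip (by rw [e2, e1]; exact hp.symm)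
      rw [e3, e2, DIVR (k z) (k z - (d+1)) hdvd (by omega) (by omega) (by omega),
         DIVR (k z) (k z - 1) hdvd (by omega) (by omega) (by omega)]
    · -- hitting color 1
      rcases lt_or_ge (k z - 1) (r/2) with hsm | hbg
      · rcases lt_or_ge (k z) (r/2) with hnlt | hnge
        · -- interval regime
          obtain ⟨i0, hi0, hle0, hlt0⟩ := aexist (k z) hnlt
          obtain ⟨i1, hi1, hle1, hlt1⟩ := aexist (k z - 1) (by omega)
          have e1 : c z = (i0+1) % 2 := hcT1 z hnlt hγ i0 hi0 hle0 hlt0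
          have hγ' : c (f^[k (f z)] (f z)) = 1 := by rw [hfz.1, hfz.2]; exact hγ
          have e2 : c (f z) = (i1+1) % 2 :=
            hcT1 (f z) (by rw [hfz.1]; exact hsm) hγ' i1 hi1
              (by rw [hfz.1]; exact hle1) (by rw [hfz.1]; exact hlt1)
          have hne : i0 ≠ i1 := by
            intro hEqi; exact hflip (by rw [e2, e1, hEqi])
          have h10 : i1 < i0 := by
            rcases lt_or_ge i1 i0 with h | h
            · exact h
            · exfalso
              have h1 : i0 < i1 := by omega
              have := AMONO (i0+1) i1 (by omega) (by omega)
              omega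
          have h2 : a (i1+1) ≤ a i0 := AMONO (i1+1) i0 (by omega) (by omega)
          have h5 := ASTEP i1 (by omega)
          have hγ'' : c (f^[k (f^[d+1] z)] (f^[d+1] z)) = 1 := by
            rw [hxd.1, hxd.2]; exact hγ
          have e3 : c (f^[d+1] z) = (i1+1) % 2 :=
            hcT1 _ (by rw [hxd.1]; omega) hγ'' i1 hi1
              (by rw [hxd.1]; omega) (by rw [hxd.1]; omega)
          rw [e3, e2]
        · -- k z = r/2
          have hkr : k z = r/2 := by omega
          obtain ⟨i1, hi1, hle1, hlt1⟩ := aexist (k z - 1) (by omega)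
          have hST := ASTEP (2*m) le_rfl
          rw [haTop] at hST
          have hi12m : i1 = 2*m := by
            apply UNIQ (k z - 1) i1 (2*m) hi1 le_rfl hle1 hlt1
            · omega
            · rw [haTop]; omega
          subst hi12m
          have hγ' : c (f^[k (f z)] (f z)) = 1 := by rw [hfz.1, hfz.2]; exact hγ
          have e2 : c (f z) = (2*m+1) % 2 :=
            hcT1 (f z) (by rw [hfz.1]; exact hsm) hγ' (2*m) le_rfl
              (by rw [hfz.1]; exact hle1) (by rw [hfz.1]; exact hlt1)
          have hγ'' : c (f^[k (f^[d+1] z)] (f^[d+1] z)) = 1 := by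
            rw [hxd.1, hxd.2]; exact hγ
          have e3 : c (f^[d+1] z) = (2*m+1) % 2 :=
            hcT1 _ (by rw [hxd.1]; omega) hγ'' (2*m) le_rfl
              (by rw [hxd.1]; omega) (by rw [hxd.1, haTop]; omega)
          rw [e3, e2]
      · -- big regime
        have e1 : c z = (k z / s) % 2 := cbig z (k z) rfl rfl (Or.inr (by omega))
        have e2 : c (f z) = ((k z - 1) / s) % 2 := cbig (f z) (k z - 1) hfz.1 hfz.2 (Or.inr hbg)
        have hdvd : s ∣ k z := by
          apply DIV (k z) (by omega)
          intro hp; exact hflip (by rw [e2, e1]; exact hp.symm)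
        have hdr : r/2 = s * (2*s) := by rw [hr2, ← hS]; ring
        obtain ⟨c1, hc1⟩ := hdvd
        have hlt2 : s * (2*s) < s * c1 := by rw [← hdr, ← hc1]; omega
        have hcc : 2*s < c1 := lt_of_mul_lt_mul_left hlt2 (Nat.zero_le s)
        have hge2 : r/2 + s ≤ k z := by
          rw [hdr, hc1]
          calc s * (2*s) + s = s * (2*s+1) := by ring
          _ ≤ s * c1 := Nat.mul_le_mul (le_refl s) (by omega)
        have e3 : c (f^[d+1] z) = ((k z - (d+1)) / s) % 2 :=
          cbig _ _ hxd.1 hxd.2 (Or.inr (by omega))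
        have hdvd' : s ∣ k z := ⟨c1, hc1⟩
        rw [e3, e2, DIVR (k z) (k z - (d+1)) hdvd' (by omega) (by omega) (by omega),
           DIVR (k z) (k z - 1) hdvd' (by omega) (by omega) (by omega)]
  -- decomposition of L at a nearby hitting point
  have LDEC : ∀ u, k u ≤ t → L u = k u + L (f^[k u] u) := by
    intro u hku
    have hcu0 : c u = c (f^[k u] u) := SMALL u (by omega)
    apply Luniq
    · have := hL1 (f^[k u] u); omega
    · have e : f^[k u + L (f^[k u] u)] u = f^[L (f^[k u] u)] (f^[k u] u) := by
        rw [show k u + L (f^[k u] u) = L (f^[k u] u) + k u from by omega,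
          Function.iterate_add_apply]
      rw [e, hcu0]
      exact hLflip _
    · intro j hj1 hj2
      rcases lt_or_ge j (k u) with hlt | hle
      · have hks := kshift u j hj1 (by omega)
        have e := SMALL (f^[j] u) (by rw [hks.1]; omega)
        rw [hks.1, hks.2] at e
        rw [e, ← hcu0]
      · obtain ⟨j', rfl⟩ : ∃ j', j = j' + k u := ⟨j - k u, by omega⟩
        rw [Function.iterate_add_apply]
        rcases Nat.eq_zero_or_pos j' with h0 | h0
        · subst h0
          simp only [Function.iterate_zero_apply]
          exact hcu0.symm
        · rw [hLconst (f^[k u] u) j' h0 (by omega)]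
          exact hcu0.symm
  -- the merging lemma, in the case where neither side passes through H before merging
  have NOHIT : ∀ u v p q, q ≤ p → p + q ≤ t → c u = c v → f^[p] u = f^[q] v →
      (∀ j, 1 ≤ j → j ≤ p → f^[j] u ∉ H) → (∀ j, 1 ≤ j → j ≤ q → f^[j] v ∉ H) →
      f^[2*t + L u] u = f^[2*t + L v] v := by
    intro u v p q hqp htq hcv he Hu Hv
    have hκ1 : 1 ≤ k (f^[p] u) := hk1 _
    have hitv : f^[q + k (f^[p] u)] v = f^[k (f^[p] u)] (f^[p] u) := by
      rw [show q + k (f^[p] u) = k (f^[p] u) + q from by omega,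
        Function.iterate_add_apply, ← he]
    have kv : k v = q + k (f^[p] u) := by
      apply kuniq
      · omega
      · rw [hitv]; exact hkH _
      · intro j hj1 hj2
        rcases le_or_gt j q with h | h
        · exact Hv j hj1 h
        · obtain ⟨j', rfl⟩ : ∃ j', j = j' + q := ⟨j - q, by omega⟩
          rw [Function.iterate_add_apply, ← he]
          exact hkmin _ j' (by omega) (by omega)
    have hitz : f^[q + k (f^[p] u)] (f^[p - q] u) = f^[k (f^[p] u)] (f^[p] u) := by
      rw [← Function.iterate_add_apply,
        show (q + k (f^[p] u)) + (p - q) = k (f^[p] u) + p from by omega,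
        Function.iterate_add_apply]
    have kz : k (f^[p - q] u) = q + k (f^[p] u) := by
      apply kuniq
      · omega
      · rw [hitz]; exact hkH _
      · intro j hj1 hj2
        rcases le_or_gt (j + (p - q)) p with h | h
        · rw [← Function.iterate_add_apply]
          exact Hu _ (by omega) h
        · obtain ⟨j', rfl⟩ : ∃ j', j = j' + q := ⟨j - q, by omega⟩
          rw [← Function.iterate_add_apply,
            show (j' + q) + (p - q) = j' + p from by omega,
            Function.iterate_add_apply]
          exact hkmin _ j' (by omega) (by omega)
    have ceq : ∀ d, c (f^[d] (f^[p - q] u)) = c (f^[d] v) := by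
      intro d
      rcases lt_or_ge d (q + k (f^[p] u)) with hd | hd
      · rcases Nat.eq_zero_or_pos d with h0 | h0
        · subst h0
          simp only [Function.iterate_zero_apply]
          exact CWD _ _ (by rw [kz, kv]) (by rw [kz, kv, hitz, hitv])
        · have h1 := kshift (f^[p - q] u) d h0 (by rw [kz]; omega)
          have h2 := kshift v d h0 (by rw [kv]; omega)
          rw [kz] at h1
          rw [kv] at h2
          exact CWD _ _ (by rw [h1.1, h2.1]) (by rw [h1.1, h2.1, h1.2, h2.2, hitz, hitv])
      · obtain ⟨d', rfl⟩ : ∃ d', d = d' + (q + k (f^[p] u)) :=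
          ⟨d - (q + k (f^[p] u)), by omega⟩
        have e1 : f^[d' + (q + k (f^[p] u))] (f^[p - q] u)
            = f^[d'] (f^[k (f^[p] u)] (f^[p] u)) := by
          rw [Function.iterate_add_apply, hitz]
        have e2 : f^[d' + (q + k (f^[p] u))] v
            = f^[d'] (f^[k (f^[p] u)] (f^[p] u)) := by
          rw [Function.iterate_add_apply, hitv]
        rw [e1, e2]
    have cz'v : c (f^[p - q] u) = c v := by
      have := ceq 0
      simpa using this
    have Leq : L (f^[p - q] u) = L v := by
      apply Luniq
      · exact hL1 v
      · rw [ceq (L v), cz'v]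
        exact hLflip v
      · intro j hj1 hj2
        rw [ceq j, cz'v]
        exact hLconst v j hj1 hj2
    rcases le_or_gt (L u) (p - q) with hLle | hLgt
    · exfalso
      have hLu1 := hL1 u
      have e1 : f (f^[L u - 1] u) = f^[L u] u := by
        conv_rhs => rw [show L u = 1 + (L u - 1) from by omega]
        rw [Function.iterate_add_apply, Function.iterate_one]
      have e2 : c (f^[L u - 1] u) = c u := by
        rcases Nat.eq_zero_or_pos (L u - 1) with h0 | h0
        · rw [h0]; simp
        · exact hLconst u (L u - 1) h0 (by omega)
      have hflip2 : c (f (f^[L u - 1] u)) ≠ c (f^[L u - 1] u) := by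
        rw [e1, e2]
        exact hLflip u
      have hrun := RUN (f^[L u - 1] u) hflip2 (p - q - L u) (by omega)
      have e3 : f^[(p - q - L u) + 1] (f^[L u - 1] u) = f^[p - q] u := by
        rw [← Function.iterate_add_apply,
          show (p - q - L u) + 1 + (L u - 1) = p - q from by omega]
      rw [e3, e1] at hrun
      apply hLflip u
      rw [← hrun, cz'v, ← hcv]
    · have hLu : L u = (p - q) + L (f^[p - q] u) := by
        apply Luniq
        · have := hL1 (f^[p - q] u); omega
        · rw [show (p - q) + L (f^[p - q] u) = L (f^[p - q] u) + (p - q) from by omega,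
            Function.iterate_add_apply]
          have hcc : c (f^[p - q] u) = c u := cz'v.trans hcv.symm
          rw [← hcc]
          exact hLflip _
        · intro j hj1 hj2
          rcases le_or_gt j (p - q) with h | h
          · exact hLconst u j hj1 (by omega)
          · obtain ⟨j', rfl⟩ : ∃ j', j = j' + (p - q) := ⟨j - (p - q), by omega⟩
            rw [Function.iterate_add_apply]
            rw [hLconst (f^[p - q] u) j' (by omega) (by omega), cz'v]
            exact hcv.symm
      have e5 : f^[2*t + L u] u = f^[2*t + L u - p] (f^[p] u) := by
        rw [← Function.iterate_add_apply, show 2*t + L u - p + p = 2*t + L u from by omega]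
      have e6 : f^[2*t + L v] v = f^[2*t + L v - q] (f^[p] u) := by
        rw [he, ← Function.iterate_add_apply,
          show 2*t + L v - q + q = 2*t + L v from by omega]
      rw [e5, e6, show 2*t + L u - p = 2*t + L v - q from by omega]
  -- the merging lemma
  have KEY : ∀ N u v p q, p + q ≤ N → p + q ≤ t → c u = c v → f^[p] u = f^[q] v →
      f^[2*t + L u] u = f^[2*t + L v] v := by
    intro N
    induction N with
    | zero =>
      intro u v p q hN htq hcv he
      have hp : p = 0 := by omega
      have hq : q = 0 := by omega
      subst hp; subst hq
      simp only [Function.iterate_zero_apply] at he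
      subst he; rfl
    | succ N ihN =>
      intro u v p q hN htq hcv he
      rcases le_or_gt (p + q) N with hred | hred
      · exact ihN u v p q hred htq hcv he
      · by_cases Hu : ∃ j, 1 ≤ j ∧ j ≤ p ∧ f^[j] u ∈ H
        · obtain ⟨j, hj1, hj2, hjH⟩ := Hu
          have hku1 := hk1 u
          have hku : k u ≤ p := by
            by_contra hcon
            exact hkmin u j hj1 (by omega) hjH
          have hLu := LDEC u (by omega)
          have he' : f^[p - k u] (f^[k u] u) = f^[q] v := by
            rw [← Function.iterate_add_apply, show (p - k u) + k u = p from by omega]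
            exact he
          have hcu0 : c u = c (f^[k u] u) := SMALL u (by omega)
          have hres := ihN (f^[k u] u) v (p - k u) q (by omega) (by omega)
            (by rw [← hcu0]; exact hcv) he'
          have efin : f^[2*t + L u] u = f^[2*t + L (f^[k u] u)] (f^[k u] u) := by
            rw [← Function.iterate_add_apply,
              show 2*t + L (f^[k u] u) + k u = 2*t + L u from by omega]
          rw [efin]
          exact hres
        · by_cases Hv : ∃ j, 1 ≤ j ∧ j ≤ q ∧ f^[j] v ∈ H
          · obtain ⟨j, hj1, hj2, hjH⟩ := Hv
            have hkv1 := hk1 v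
            have hkv : k v ≤ q := by
              by_contra hcon
              exact hkmin v j hj1 (by omega) hjH
            have hLv := LDEC v (by omega)
            have he' : f^[p] u = f^[q - k v] (f^[k v] v) := by
              rw [← Function.iterate_add_apply, show (q - k v) + k v = q from by omega]
              exact he
            have hcv0 : c v = c (f^[k v] v) := SMALL v (by omega)
            have hres := ihN u (f^[k v] v) p (q - k v) (by omega) (by omega)
              (by rw [← hcv0]; exact hcv) he'
            have efin : f^[2*t + L v] v = f^[2*t + L (f^[k v] v)] (f^[k v] v) := by
              rw [← Function.iterate_add_apply,
                show 2*t + L (f^[k v] v) + k v = 2*t + L v from by omega]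
            rw [efin]
            exact hres
          · push_neg at Hu Hv
            rcases le_or_gt q p with hqp | hqp
            · exact NOHIT u v p q hqp htq hcv he
                (fun j h1 h2 => Hu j h1 h2) (fun j h1 h2 => Hv j h1 h2)
            · exact (NOHIT v u q p (by omega) (by omega) hcv.symm he.symm
                (fun j h1 h2 => Hv j h1 h2) (fun j h1 h2 => Hu j h1 h2)).symm
  -- walks in the graph generated by f give merging orbits
  have WK : ∀ (A B : X) (wlk : (funGraph f).Walk A B),
      ∃ p q : ℕ, p + q ≤ wlk.length ∧ f^[p] A = f^[q] B := by
    intro A B wlk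
    induction wlk with
    | nil => exact ⟨0, 0, by simp, rfl⟩
    | @cons A' Z B' hadj w' ih =>
      obtain ⟨p, q, hpq, heq⟩ := ih
      have hadj' : A' ≠ Z ∧ (f A' = Z ∨ f Z = A') := hadj
      rcases hadj'.2 with hAZ | hZA
      · refine ⟨p+1, q, ?_, ?_⟩
        · simp only [SimpleGraph.Walk.length_cons]; omega
        · rw [Function.iterate_succ_apply, hAZ]; exact heq
      · rcases Nat.eq_zero_or_pos p with h0 | h0
        · subst h0
          simp only [Function.iterate_zero_apply] at heq
          refine ⟨0, q+1, ?_, ?_⟩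
          · simp only [SimpleGraph.Walk.length_cons]; omega
          · simp only [Function.iterate_zero_apply]
            rw [Function.iterate_succ_apply', ← heq, hZA]
        · obtain ⟨p', rfl⟩ : ∃ p', p = p' + 1 := ⟨p - 1, by omega⟩
          refine ⟨p', q, ?_, ?_⟩
          · simp only [SimpleGraph.Walk.length_cons]; omega
          · rw [Function.iterate_succ_apply, hZA] at heq
            exact heq
  -- conclusion
  intro i hi x y hcx hEq
  have main : ∀ A B : X, Relation.EqvGen (classRel f t {z | c z = i}) A B →
      f^[2*t + L A] A = f^[2*t + L B] B := by
    intro A B hAB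
    induction hAB with
    | rel A' B' hab =>
      have hab' : A' ∈ {z | c z = i} ∧ B' ∈ {z | c z = i} ∧ distLE f t A' B' := hab
      obtain ⟨hA, hB, hd2⟩ := hab'
      have hd2' : (funGraph f).Reachable A' B' ∧ (funGraph f).dist A' B' ≤ t := hd2
      obtain ⟨hreach, hdist⟩ := hd2'
      obtain ⟨wlk, hwlk⟩ := hreach.exists_walk_length_eq_dist
      obtain ⟨p, q, hpq, heq⟩ := WK A' B' wlk
      have hA' : c A' = i := hA
      have hB' : c B' = i := hB
      exact KEY (p+q) A' B' p q le_rfl (by omega) (hA'.trans hB'.symm) heq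
    | refl A' => rfl
    | symm A' B' hs ihs => exact ihs.symm
    | trans A' B' C' h1 h2 ih1 ih2 => exact ih1.trans ih2
  exact ⟨2*t + L y, (main x y hEq).symm⟩
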